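/- Let U, V, W ⊆ ℝ^d be subspaces with dim U = dim V = dim W = k ≥ 1. Then the largest principal angle satisfies the triangle inequality ∠(U,W) ≤ ∠(U,V) + ∠(V,W); together with symmetry and definiteness this makes ∠ a metric on the Grassmannian 𝒢(k,d) of k-dimensional subspaces of ℝ^d. -/

import Mathlib

set_option linter.unusedSectionVars false

open Filter

noncomputable section

abbrev Euc (d : ℕ) := EuclideanSpace ℝ (Fin d)

/-- Angle between the lines spanned by two vectors. -/
noncomputable def vecAngle {d : ℕ} (v w : Euc d) : ℝ :=
  Real.arccos (|(inner ℝ v w : ℝ)| / (‖v‖ * ‖w‖))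

/-- Largest principal angle between two subspaces of equal dimension. -/
noncomputable def subAngle {d : ℕ} (V W : Submodule ℝ (Euc d)) : ℝ :=
  Real.arccos (sInf {c : ℝ | ∃ v ∈ V, ‖v‖ = 1 ∧
    c = sSup {r : ℝ | ∃ w ∈ W, ‖w‖ = 1 ∧ r = (inner ℝ v w : ℝ)}})

namespace SubAngleAux

open Real Module

/-! ### Part 1: triangle inequality for the angle between lines -/

lemma arccos_antitone : Antitone Real.arccos := by
  intro x y h
  unfold Real.arccos
  have := Real.monotone_arcsin h
  linarith

variable {E F : Type*} [NormedAddCommGroup E] [InnerProductSpace ℝ E]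
  [NormedAddCommGroup F] [InnerProductSpace ℝ F]

lemma inner_expand {u w : E} (v : E) (hv : ‖v‖ = 1) (p q : ℝ) :
    (inner ℝ (u - p • v) (w - q • v) : ℝ)
      = inner ℝ u w - q * inner ℝ u v - p * inner ℝ v w + p * q := by
  have hvv : (inner ℝ v v : ℝ) = 1 := by
    rw [real_inner_self_eq_norm_sq, hv]; norm_num
  simp only [inner_sub_left, inner_sub_right, real_inner_smul_left, real_inner_smul_right, hvv]
  ring

/-- Key inequality: `|⟪u,w⟫ - ⟪u,v⟫⟪v,w⟫| ≤ √(1-⟪u,v⟫²)√(1-⟪v,w⟫²)` for unit vectors. -/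
lemma key_cs {u v w : E} (hu : ‖u‖ = 1) (hv : ‖v‖ = 1) (hw : ‖w‖ = 1) :
    |(inner ℝ u w : ℝ) - inner ℝ u v * inner ℝ v w| ≤
      Real.sqrt (1 - (inner ℝ u v : ℝ)^2) * Real.sqrt (1 - (inner ℝ v w : ℝ)^2) := by
  have hcomm1 : (inner ℝ v u : ℝ) = inner ℝ u v := real_inner_comm u v
  have hcomm2 : (inner ℝ w v : ℝ) = inner ℝ v w := real_inner_comm v w
  set p : ℝ := inner ℝ u v with hp
  set q : ℝ := inner ℝ v w with hq
  have h1 : (inner ℝ (u - p • v) (w - q • v) : ℝ) = inner ℝ u w - p * q := by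
    rw [inner_expand v hv, ← hp, ← hq]; ring
  have h2 : ‖u - p • v‖ = Real.sqrt (1 - p^2) := by
    rw [← Real.sqrt_sq (norm_nonneg _)]
    congr 1
    rw [← real_inner_self_eq_norm_sq, inner_expand v hv,
      real_inner_self_eq_norm_sq, hu, hcomm1, ← hp]
    ring
  have h3 : ‖w - q • v‖ = Real.sqrt (1 - q^2) := by
    rw [← Real.sqrt_sq (norm_nonneg _)]
    congr 1
    rw [← real_inner_self_eq_norm_sq, inner_expand v hv,
      real_inner_self_eq_norm_sq, hw, hcomm2, ← hq]
    ring
  calc |(inner ℝ u w : ℝ) - p * q| = |(inner ℝ (u - p • v) (w - q • v) : ℝ)| := by rw [h1]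
    _ ≤ ‖u - p • v‖ * ‖w - q • v‖ := abs_real_inner_le_norm _ _
    _ = _ := by rw [h2, h3]

/-- Triangle inequality for angles between lines spanned by unit vectors. -/
lemma lineAngle_triangle {u v w : E} (hu : ‖u‖ = 1) (hv : ‖v‖ = 1) (hw : ‖w‖ = 1) :
    Real.arccos |(inner ℝ u w : ℝ)| ≤
      Real.arccos |(inner ℝ u v : ℝ)| + Real.arccos |(inner ℝ v w : ℝ)| := by
  set p : ℝ := inner ℝ u v
  set q : ℝ := inner ℝ v w
  set r : ℝ := inner ℝ u w
  have hp1 : |p| ≤ 1 := by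
    have := abs_real_inner_le_norm u v; rwa [hu, hv, one_mul] at this
  have hq1 : |q| ≤ 1 := by
    have := abs_real_inner_le_norm v w; rwa [hv, hw, one_mul] at this
  have hc : |p| * |q| - Real.sqrt (1 - p^2) * Real.sqrt (1 - q^2) ≤ |r| := by
    have hcs := key_cs hu hv hw
    have h4 : |p * q| - |r - p * q| ≤ |r| := by
      have := abs_sub_abs_le_abs_sub (p * q) r
      rw [abs_sub_comm] at this
      linarith
    calc |p| * |q| - Real.sqrt (1 - p^2) * Real.sqrt (1 - q^2)
        ≤ |p * q| - |r - p * q| := by rw [abs_mul]; linarith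
      _ ≤ |r| := h4
  have hcos : Real.cos (Real.arccos |p| + Real.arccos |q|) =
      |p| * |q| - Real.sqrt (1 - p^2) * Real.sqrt (1 - q^2) := by
    rw [Real.cos_add, Real.cos_arccos (by linarith [abs_nonneg p]) hp1,
      Real.cos_arccos (by linarith [abs_nonneg q]) hq1, Real.sin_arccos, Real.sin_arccos,
      sq_abs, sq_abs]
  have h1 : Real.arccos |r| ≤ Real.arccos (Real.cos (Real.arccos |p| + Real.arccos |q|)) := by
    rw [hcos]; exact arccos_antitone hc
  refine h1.trans ?_
  set t := Real.arccos |p| + Real.arccos |q| with hts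
  have ht0 : 0 ≤ t := add_nonneg (Real.arccos_nonneg _) (Real.arccos_nonneg _)
  rcases le_or_gt t π with h | h
  · rw [Real.arccos_cos ht0 h]
  · exact (Real.arccos_le_pi _).trans h.le

/-! ### Part 2: minimum of `‖A x‖` over the unit sphere and the adjoint -/

variable [FiniteDimensional ℝ E] [FiniteDimensional ℝ F]

def minSet (A : E →L[ℝ] F) : Set ℝ := {c : ℝ | ∃ x : E, ‖x‖ = 1 ∧ c = ‖A x‖}

lemma minSet_nonneg {A : E →L[ℝ] F} {c : ℝ} (hc : c ∈ minSet A) : 0 ≤ c := by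
  obtain ⟨x, _, rfl⟩ := hc; exact norm_nonneg _

lemma minSet_bddBelow (A : E →L[ℝ] F) : BddBelow (minSet A) :=
  ⟨0, fun _ hc => minSet_nonneg hc⟩

lemma minSet_nonempty (hE : 0 < finrank ℝ E) (A : E →L[ℝ] F) : (minSet A).Nonempty := by
  have : Nontrivial E := Module.nontrivial_of_finrank_pos hE
  obtain ⟨x, hx⟩ := NormedSpace.sphere_nonempty (x := (0:E)) (r := 1) |>.mpr zero_le_one
  refine ⟨‖A x‖, x, ?_, rfl⟩
  simp at hx; exact hx

lemma minSet_compact (A : E →L[ℝ] F) : IsCompact (minSet A) := by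
  have h : minSet A = (fun x => ‖A x‖) '' Metric.sphere (0:E) 1 := by
    ext c
    simp only [minSet, Set.mem_setOf_eq, Set.mem_image, Metric.mem_sphere, dist_zero_right]
    exact ⟨fun ⟨x, h1, h2⟩ => ⟨x, h1, h2.symm⟩, fun ⟨x, h1, h2⟩ => ⟨x, h1, h2.symm⟩⟩
  rw [h]
  exact (isCompact_sphere 0 1).image (continuous_norm.comp A.continuous)

lemma sInf_minSet_mem (hE : 0 < finrank ℝ E) (A : E →L[ℝ] F) :
    sInf (minSet A) ∈ minSet A :=
  (minSet_compact A).sInf_mem (minSet_nonempty hE A)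

lemma sInf_minSet_nonneg (hE : 0 < finrank ℝ E) (A : E →L[ℝ] F) : 0 ≤ sInf (minSet A) :=
  minSet_nonneg (sInf_minSet_mem hE A)

/-- If B is a two-sided inverse of A, the minimum of ‖A x‖ on the sphere is ‖B‖⁻¹. -/
lemma sInf_minSet_eq_inv_norm (hE : 0 < finrank ℝ E) (A : E →L[ℝ] F) (B : F →L[ℝ] E)
    (hBA : ∀ x, B (A x) = x) (hAB : ∀ y, A (B y) = y) :
    sInf (minSet A) = ‖B‖⁻¹ := by
  obtain ⟨x₀, hx₀, hm⟩ := sInf_minSet_mem hE A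
  set m := sInf (minSet A) with hmdef
  have hm0 : 0 < m := by
    rcases (minSet_nonneg ⟨x₀, hx₀, hm⟩).lt_or_eq with h | h
    · exact h
    · exfalso
      have h1 : A x₀ = 0 := by rwa [← h, eq_comm, norm_eq_zero] at hm
      have h2 : x₀ = 0 := by rw [← hBA x₀, h1, map_zero]
      rw [h2, norm_zero] at hx₀; norm_num at hx₀
  have hub : ‖B‖ ≤ m⁻¹ := by
    refine ContinuousLinearMap.opNorm_le_bound B (by positivity) fun y => ?_
    rcases eq_or_ne (B y) 0 with h | h
    · rw [h, norm_zero]; positivity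
    · have h1 : m ≤ ‖A (‖B y‖⁻¹ • B y)‖ := by
        refine csInf_le (minSet_bddBelow A) ⟨_, ?_, rfl⟩
        rw [norm_smul, norm_inv, norm_norm, inv_mul_cancel₀ (norm_ne_zero_iff.2 h)]
      rw [map_smul, hAB, norm_smul, norm_inv, norm_norm] at h1
      have h2 : m * ‖B y‖ ≤ ‖y‖ := by
        rwa [inv_mul_eq_div, le_div_iff₀ (norm_pos_iff.2 h)] at h1
      rw [inv_mul_eq_div, le_div_iff₀ hm0]
      nlinarith
  have hlb : m⁻¹ ≤ ‖B‖ := by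
    have h1 : (1:ℝ) ≤ ‖B‖ * m := by
      calc (1:ℝ) = ‖x₀‖ := hx₀.symm
        _ = ‖B (A x₀)‖ := by rw [hBA]
        _ ≤ ‖B‖ * ‖A x₀‖ := B.le_opNorm _
        _ = ‖B‖ * m := by rw [← hm]
    rw [inv_le_iff_one_le_mul₀ hm0]
    linarith [mul_comm ‖B‖ m]
  rw [le_antisymm hub hlb, inv_inv]

/-- Key symmetry: for equal finite dimensions, the minimum of `‖A x‖` on the unit sphere
equals that of the adjoint. -/
lemma sInf_minSet_adjoint (hEF : finrank ℝ E = finrank ℝ F) (hE : 0 < finrank ℝ E)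
    (A : E →L[ℝ] F) :
    sInf (minSet (ContinuousLinearMap.adjoint A)) = sInf (minSet A) := by
  obtain ⟨x₀, hx₀, hm⟩ := sInf_minSet_mem hE A
  set m := sInf (minSet A) with hmdef
  have hF : 0 < finrank ℝ F := hEF ▸ hE
  have hx₀0 : x₀ ≠ 0 := fun h => by rw [h, norm_zero] at hx₀; norm_num at hx₀
  rcases (minSet_nonneg ⟨x₀, hx₀, hm⟩).eq_or_lt with h0 | hpos
  · -- m = 0
    have hAx₀ : A x₀ = 0 := by rwa [← h0, eq_comm, norm_eq_zero] at hm
    have hker : LinearMap.ker (A : E →ₗ[ℝ] F) ≠ ⊥ := by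
      intro h
      exact hx₀0 (LinearMap.ker_eq_bot.mp h (by simp [hAx₀]))
    have hrange : LinearMap.range (A : E →ₗ[ℝ] F) ≠ ⊤ := by
      intro h
      have h1 := LinearMap.finrank_range_add_finrank_ker (A : E →ₗ[ℝ] F)
      have h2 : finrank ℝ (LinearMap.range (A : E →ₗ[ℝ] F)) = finrank ℝ F := by
        rw [h]; exact finrank_top ℝ F
      have h3 : finrank ℝ (LinearMap.ker (A : E →ₗ[ℝ] F)) ≠ 0 :=
        fun hz => hker (Submodule.finrank_eq_zero.mp hz)
      omega
    have horth : (LinearMap.range (A : E →ₗ[ℝ] F))ᗮ ≠ ⊥ := by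
      rwa [Ne, Submodule.orthogonal_eq_bot_iff]
    obtain ⟨y, hyO, hy0⟩ := Submodule.exists_mem_ne_zero_of_ne_bot horth
    set y' := ‖y‖⁻¹ • y with hy'
    have hy'O : y' ∈ (LinearMap.range (A : E →ₗ[ℝ] F))ᗮ := Submodule.smul_mem _ _ hyO
    have hy'1 : ‖y'‖ = 1 := by
      rw [hy', norm_smul, norm_inv, norm_norm, inv_mul_cancel₀ (norm_ne_zero_iff.2 hy0)]
    have hAy : ContinuousLinearMap.adjoint A y' = 0 := by
      have h1 : ∀ x : E, (inner ℝ (ContinuousLinearMap.adjoint A y') x : ℝ) = 0 := by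
        intro x
        rw [ContinuousLinearMap.adjoint_inner_left]
        exact (Submodule.mem_orthogonal' _ _).mp hy'O _ ⟨x, rfl⟩
      have := h1 (ContinuousLinearMap.adjoint A y')
      rwa [inner_self_eq_zero] at this
    have hle : sInf (minSet (ContinuousLinearMap.adjoint A)) ≤ 0 := by
      refine csInf_le (minSet_bddBelow _) ⟨y', hy'1, ?_⟩
      rw [hAy, norm_zero]
    have hge := sInf_minSet_nonneg hF (ContinuousLinearMap.adjoint A)
    rw [le_antisymm hle hge]; exact h0
  · -- m > 0 : A bijective
    have hinj : Function.Injective (A : E →ₗ[ℝ] F) := by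
      rw [← LinearMap.ker_eq_bot, Submodule.eq_bot_iff]
      intro x hx
      by_contra hx0
      have h1 : m ≤ ‖A (‖x‖⁻¹ • x)‖ := by
        refine csInf_le (minSet_bddBelow A) ⟨_, ?_, rfl⟩
        rw [norm_smul, norm_inv, norm_norm, inv_mul_cancel₀ (norm_ne_zero_iff.2 hx0)]
      have h2 : A x = 0 := hx
      rw [map_smul, h2, smul_zero, norm_zero] at h1
      linarith
    have hbij : Function.Bijective (A : E →ₗ[ℝ] F) :=
      ⟨hinj, (LinearMap.injective_iff_surjective_of_finrank_eq_finrank hEF).mp hinj⟩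
    set e := LinearEquiv.ofBijective (A : E →ₗ[ℝ] F) hbij with he
    set B : F →L[ℝ] E := LinearMap.toContinuousLinearMap (e.symm : F →ₗ[ℝ] E) with hB
    have hBA : ∀ x, B (A x) = x := fun x => e.symm_apply_apply x
    have hAB : ∀ y, A (B y) = y := fun y => e.apply_symm_apply y
    have hBA' : ∀ y, ContinuousLinearMap.adjoint B (ContinuousLinearMap.adjoint A y) = y := by
      intro y
      refine ext_inner_right ℝ fun x => ?_
      rw [ContinuousLinearMap.adjoint_inner_left, ContinuousLinearMap.adjoint_inner_left, hAB]
    have hAB' : ∀ x, ContinuousLinearMap.adjoint A (ContinuousLinearMap.adjoint B x) = x := by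
      intro x
      refine ext_inner_right ℝ fun y => ?_
      rw [ContinuousLinearMap.adjoint_inner_left, ContinuousLinearMap.adjoint_inner_left, hBA]
    rw [sInf_minSet_eq_inv_norm hF (ContinuousLinearMap.adjoint A)
        (ContinuousLinearMap.adjoint B) hBA' hAB',
      ContinuousLinearMap.adjoint.norm_map B, hmdef,
      sInf_minSet_eq_inv_norm hE A B hBA hAB]

/-! ### Part 3: description of `subAngle` via orthogonal projections -/

variable {d : ℕ}

def Sset (v : Euc d) (W : Submodule ℝ (Euc d)) : Set ℝ :=
  {r : ℝ | ∃ w ∈ W, ‖w‖ = 1 ∧ r = (inner ℝ v w : ℝ)}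

def Tset (V W : Submodule ℝ (Euc d)) : Set ℝ :=
  {c : ℝ | ∃ v ∈ V, ‖v‖ = 1 ∧ c = ‖(Submodule.orthogonalProjectionOnto W v : Euc d)‖}

lemma proj_norm_le (W : Submodule ℝ (Euc d)) (v : Euc d) :
    ‖(Submodule.orthogonalProjectionOnto W v : Euc d)‖ ≤ ‖v‖ := by
  have h1 : ‖Submodule.orthogonalProjectionOnto W v‖ ≤ ‖Submodule.orthogonalProjectionOnto W‖ * ‖v‖ :=
    (Submodule.orthogonalProjectionOnto W).le_opNorm v
  have h2 : ‖Submodule.orthogonalProjectionOnto W‖ * ‖v‖ ≤ 1 * ‖v‖ :=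
    mul_le_mul_of_nonneg_right (Submodule.orthogonalProjectionOnto_norm_le W) (norm_nonneg v)
  simpa using h1.trans h2

lemma exists_unit {W : Submodule ℝ (Euc d)} (hW : W ≠ ⊥) : ∃ w ∈ W, ‖w‖ = 1 := by
  obtain ⟨w, hwW, hw0⟩ := Submodule.exists_mem_ne_zero_of_ne_bot hW
  refine ⟨‖w‖⁻¹ • w, W.smul_mem _ hwW, ?_⟩
  rw [norm_smul, norm_inv, norm_norm, inv_mul_cancel₀ (norm_ne_zero_iff.2 hw0)]

lemma inner_eq_inner_proj {W : Submodule ℝ (Euc d)} {w : Euc d} (hw : w ∈ W) (v : Euc d) :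
    (inner ℝ v w : ℝ) = inner ℝ (Submodule.orthogonalProjectionOnto W v : Euc d) w := by
  have h := Submodule.sub_starProjection_mem_orthogonal (K := W) v
  have h0 : (inner ℝ (v - (Submodule.orthogonalProjectionOnto W v : Euc d)) w : ℝ) = 0 :=
    (Submodule.mem_orthogonal' W _).mp h w hw
  rw [inner_sub_left] at h0
  linarith

lemma isGreatest_Sset {W : Submodule ℝ (Euc d)} (hW : W ≠ ⊥) (v : Euc d) :
    IsGreatest (Sset v W) ‖(Submodule.orthogonalProjectionOnto W v : Euc d)‖ := by
  set Pv : Euc d := (Submodule.orthogonalProjectionOnto W v : Euc d) with hPv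
  have hPvW : Pv ∈ W := (Submodule.orthogonalProjectionOnto W v).2
  constructor
  · rcases eq_or_ne Pv 0 with h0 | h0
    · obtain ⟨w, hwW, hw1⟩ := exists_unit hW
      refine ⟨w, hwW, hw1, ?_⟩
      rw [inner_eq_inner_proj hwW, ← hPv, h0, inner_zero_left, norm_zero]
    · refine ⟨‖Pv‖⁻¹ • Pv, W.smul_mem _ hPvW, ?_, ?_⟩
      · rw [norm_smul, norm_inv, norm_norm, inv_mul_cancel₀ (norm_ne_zero_iff.2 h0)]
      · rw [real_inner_smul_right, inner_eq_inner_proj hPvW, ← hPv,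
          real_inner_self_eq_norm_sq]
        have hn : ‖Pv‖ ≠ 0 := norm_ne_zero_iff.2 h0
        field_simp
  · rintro r ⟨w, hwW, hw1, rfl⟩
    calc (inner ℝ v w : ℝ) = inner ℝ Pv w := inner_eq_inner_proj hwW v
      _ ≤ ‖Pv‖ * ‖w‖ := real_inner_le_norm _ _
      _ = ‖Pv‖ := by rw [hw1, mul_one]

lemma subAngle_eq_Tset {V W : Submodule ℝ (Euc d)} (hW : W ≠ ⊥) :
    subAngle V W = Real.arccos (sInf (Tset V W)) := by
  unfold subAngle
  congr 2
  ext c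
  constructor
  · rintro ⟨v, hvV, hv1, rfl⟩
    exact ⟨v, hvV, hv1, ((isGreatest_Sset hW v).csSup_eq).symm ▸ rfl⟩
  · rintro ⟨v, hvV, hv1, rfl⟩
    exact ⟨v, hvV, hv1, ((isGreatest_Sset hW v).csSup_eq).symm⟩

lemma isCompact_Tset (V W : Submodule ℝ (Euc d)) : IsCompact (Tset V W) := by
  have hc : IsCompact ((V : Set (Euc d)) ∩ Metric.sphere 0 1) :=
    (isCompact_sphere (0 : Euc d) 1).inter_left V.closed_of_finiteDimensional
  have h : Tset V W = (fun v => ‖(Submodule.orthogonalProjectionOnto W v : Euc d)‖) ''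
      ((V : Set (Euc d)) ∩ Metric.sphere 0 1) := by
    ext c
    simp only [Set.mem_image, Set.mem_inter_iff, SetLike.mem_coe, Metric.mem_sphere,
      dist_zero_right, Tset, Set.mem_setOf_eq]
    constructor
    · rintro ⟨v, hvV, hv1, rfl⟩; exact ⟨v, ⟨hvV, hv1⟩, rfl⟩
    · rintro ⟨v, ⟨hvV, hv1⟩, rfl⟩; exact ⟨v, hvV, hv1, rfl⟩
  rw [h]
  exact hc.image ((continuous_norm.comp
    (continuous_subtype_val.comp (Submodule.orthogonalProjectionOnto W).continuous)))

lemma Tset_nonempty {V : Submodule ℝ (Euc d)} (W : Submodule ℝ (Euc d)) (hV : V ≠ ⊥) :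
    (Tset V W).Nonempty := by
  obtain ⟨v, hvV, hv1⟩ := exists_unit hV
  exact ⟨_, v, hvV, hv1, rfl⟩

lemma Tset_mem_Icc {V W : Submodule ℝ (Euc d)} {c : ℝ} (hc : c ∈ Tset V W) :
    c ∈ Set.Icc (0:ℝ) 1 := by
  obtain ⟨v, hvV, hv1, rfl⟩ := hc
  refine ⟨norm_nonneg _, ?_⟩
  calc ‖(Submodule.orthogonalProjectionOnto W v : Euc d)‖ ≤ ‖v‖ := proj_norm_le W v
    _ = 1 := hv1

lemma Tset_bddBelow (V W : Submodule ℝ (Euc d)) : BddBelow (Tset V W) :=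
  ⟨0, fun _ hc => (Tset_mem_Icc hc).1⟩

lemma sInf_Tset_mem {V : Submodule ℝ (Euc d)} (W : Submodule ℝ (Euc d)) (hV : V ≠ ⊥) :
    sInf (Tset V W) ∈ Tset V W :=
  (isCompact_Tset V W).sInf_mem (Tset_nonempty W hV)

/-- The set `Tset V W` is the `minSet` of the projection operator `V → W`. -/
lemma Tset_eq_minSet (V W : Submodule ℝ (Euc d)) :
    Tset V W = minSet ((Submodule.orthogonalProjectionOnto W).comp V.subtypeL) := by
  ext c
  constructor
  · rintro ⟨v, hvV, hv1, rfl⟩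
    exact ⟨⟨v, hvV⟩, hv1, rfl⟩
  · rintro ⟨⟨v, hvV⟩, hv1, rfl⟩
    exact ⟨v, hvV, hv1, rfl⟩

lemma adjoint_proj_comp (V W : Submodule ℝ (Euc d)) :
    ContinuousLinearMap.adjoint ((Submodule.orthogonalProjectionOnto W).comp V.subtypeL)
      = (Submodule.orthogonalProjectionOnto V).comp W.subtypeL := by
  rw [ContinuousLinearMap.adjoint_comp, Submodule.adjoint_orthogonalProjection,
    Submodule.adjoint_subtypeL]

end SubAngleAux

open SubAngleAux Module

lemma ne_bot_of_finrank_pos {d k : ℕ} (hk : 1 ≤ k) {V : Submodule ℝ (Euc d)}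
    (hV : finrank ℝ V = k) : V ≠ ⊥ := by
  intro h
  rw [h, finrank_bot] at hV
  omega

/-- The largest principal angle satisfies the triangle inequality
`∠(U,W) ≤ ∠(U,V) + ∠(V,W)` on subspaces of equal dimension `k ≥ 1`; together with symmetry and
definiteness, `∠` is a metric on the Grassmannian `𝒢(k,d)`. -/
theorem subAngle_triangle_symm_def {d k : ℕ} (hk : 1 ≤ k)
    (U V W : Submodule ℝ (Euc d))
    (hU : Module.finrank ℝ U = k) (hV : Module.finrank ℝ V = k)
    (hW : Module.finrank ℝ W = k) :
    subAngle U W ≤ subAngle U V + subAngle V W ∧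
    subAngle U V = subAngle V U ∧
    (subAngle U V = 0 ↔ U = V) := by
  have hUb : U ≠ ⊥ := ne_bot_of_finrank_pos hk hU
  have hVb : V ≠ ⊥ := ne_bot_of_finrank_pos hk hV
  have hWb : W ≠ ⊥ := ne_bot_of_finrank_pos hk hW
  refine ⟨?_, ?_, ?_⟩
  · -- triangle inequality
    obtain ⟨u₀, hu₀U, hu₀1, hu₀m⟩ := sInf_Tset_mem W hUb
    -- the best approximation of u₀ in V
    obtain ⟨v₀, hv₀V, hv₀1, hv₀⟩ := (isGreatest_Sset hVb u₀).1
    obtain ⟨w₀, hw₀W, hw₀1, hw₀⟩ := (isGreatest_Sset hWb v₀).1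
    have hp0 : (0:ℝ) ≤ inner ℝ u₀ v₀ := hv₀ ▸ norm_nonneg _
    have hq0 : (0:ℝ) ≤ inner ℝ v₀ w₀ := hw₀ ▸ norm_nonneg _
    have habs : |(inner ℝ u₀ w₀ : ℝ)| ≤ ‖(Submodule.orthogonalProjectionOnto W u₀ : Euc d)‖ := by
      rw [abs_le]
      constructor
      · have h1 : (inner ℝ u₀ (-w₀) : ℝ) ≤ ‖(Submodule.orthogonalProjectionOnto W u₀ : Euc d)‖ :=
          (isGreatest_Sset hWb u₀).2 ⟨-w₀, W.neg_mem hw₀W, by rw [norm_neg, hw₀1], rfl⟩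
        rw [inner_neg_right] at h1
        linarith
      · exact (isGreatest_Sset hWb u₀).2 ⟨w₀, hw₀W, hw₀1, rfl⟩
    have h1 : subAngle U W ≤ Real.arccos |(inner ℝ u₀ w₀ : ℝ)| := by
      rw [subAngle_eq_Tset hWb, hu₀m]
      exact arccos_antitone habs
    have h2 : Real.arccos |(inner ℝ u₀ v₀ : ℝ)| ≤ subAngle U V := by
      rw [subAngle_eq_Tset hVb]
      refine arccos_antitone ?_
      rw [abs_of_nonneg hp0, ← hv₀]
      exact csInf_le (Tset_bddBelow U V) ⟨u₀, hu₀U, hu₀1, rfl⟩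
    have h3 : Real.arccos |(inner ℝ v₀ w₀ : ℝ)| ≤ subAngle V W := by
      rw [subAngle_eq_Tset hWb]
      refine arccos_antitone ?_
      rw [abs_of_nonneg hq0, ← hw₀]
      exact csInf_le (Tset_bddBelow V W) ⟨v₀, hv₀V, hv₀1, rfl⟩
    calc subAngle U W ≤ Real.arccos |(inner ℝ u₀ w₀ : ℝ)| := h1
      _ ≤ Real.arccos |(inner ℝ u₀ v₀ : ℝ)| + Real.arccos |(inner ℝ v₀ w₀ : ℝ)| :=
          lineAngle_triangle hu₀1 hv₀1 hw₀1
      _ ≤ subAngle U V + subAngle V W := add_le_add h2 h3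
  · -- symmetry
    rw [subAngle_eq_Tset hVb, subAngle_eq_Tset hUb]
    congr 1
    rw [Tset_eq_minSet U V, Tset_eq_minSet V U]
    have := sInf_minSet_adjoint (E := U) (F := V) (by rw [hU, hV])
      (by rw [hU]; omega) ((Submodule.orthogonalProjectionOnto V).comp U.subtypeL)
    rw [adjoint_proj_comp U V] at this
    exact this.symm
  · -- definiteness
    constructor
    · intro h
      rw [subAngle_eq_Tset hVb, Real.arccos_eq_zero] at h
      have hle : U ≤ V := by
        intro u huU
        rcases eq_or_ne u 0 with rfl | hu0
        · exact V.zero_mem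
        · set u' := ‖u‖⁻¹ • u with hu'
          have hu'U : u' ∈ U := U.smul_mem _ huU
          have hu'1 : ‖u'‖ = 1 := by
            rw [hu', norm_smul, norm_inv, norm_norm, inv_mul_cancel₀ (norm_ne_zero_iff.2 hu0)]
          have hmem : ‖(Submodule.orthogonalProjectionOnto V u' : Euc d)‖ ∈ Tset U V :=
            ⟨u', hu'U, hu'1, rfl⟩
          have h1 : (1:ℝ) ≤ ‖(Submodule.orthogonalProjectionOnto V u' : Euc d)‖ :=
            h.trans (csInf_le (Tset_bddBelow U V) hmem)
          have h2 := (Tset_mem_Icc hmem).2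
          have heq : ‖(Submodule.orthogonalProjectionOnto V u' : Euc d)‖ = 1 := le_antisymm h2 h1
          -- Pythagoras: the orthogonal part vanishes
          have hpyth := Submodule.norm_sq_eq_add_norm_sq_projection u' V
          rw [hu'1] at hpyth
          have hnorm : ‖(Submodule.orthogonalProjectionOnto V u' : Euc d)‖
              = ‖Submodule.orthogonalProjectionOnto V u'‖ := rfl
          rw [← hnorm, heq] at hpyth
          have h3 : ‖Submodule.orthogonalProjectionOnto Vᗮ u'‖ = 0 := by nlinarith [norm_nonneg (Submodule.orthogonalProjectionOnto Vᗮ u')]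
          have h4 : (Submodule.orthogonalProjectionOnto Vᗮ u' : Euc d) = 0 := by
            have := norm_eq_zero.mp h3
            rw [this]; rfl
          have h5 : u' ∈ V := by
            have hadd : (Submodule.orthogonalProjectionOnto V u' : Euc d) + (Submodule.orthogonalProjectionOnto Vᗮ u' : Euc d) = u' :=
                Submodule.starProjection_add_starProjection_orthogonal (K := V) u'
            rw [h4, add_zero] at hadd
            rw [← hadd]
            exact (Submodule.orthogonalProjectionOnto V u').2
          have : u = ‖u‖ • u' := by
            rw [hu', smul_smul, mul_inv_cancel₀ (norm_ne_zero_iff.2 hu0), one_smul]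
          rw [this]
          exact V.smul_mem _ h5
      exact Submodule.eq_of_le_of_finrank_eq hle (by rw [hU, hV])
    · rintro rfl
      rw [subAngle_eq_Tset hVb]
      have hT : Tset U U = {1} := by
        ext c
        simp only [Set.mem_singleton_iff]
        constructor
        · rintro ⟨v, hvV, hv1, rfl⟩
          rw [show (Submodule.orthogonalProjectionOnto U v : Euc d) = v from Submodule.starProjection_eq_self_iff.mpr hvV, hv1]
        · rintro rfl
          obtain ⟨v, hvV, hv1⟩ := exists_unit hUb
          exact ⟨v, hvV, hv1, by rw [show (Submodule.orthogonalProjectionOnto U v : Euc d) = v from Submodule.starProjection_eq_self_iff.mpr hvV, hv1]⟩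
      rw [hT, csInf_singleton, Real.arccos_one]
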